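/- Monotone iteration with shifted operator: suppose C > 0 satisfies C ≥ 1 + sup_Σ(λe^{-v}) · sup_ℝ F', where λ > 0, v is smooth, and F is smooth and bounded with bounded derivative. If smooth functions f_{n-1} ≥ f_n satisfy (Δ + C)f_{n+1} = -(λ/2)e^{-v}F(2f_n + u) + C f_n + c and (Δ + C)f_n = -(λ/2)e^{-v}F(2f_{n-1} + u) + C f_{n-1} + c for a smooth u and constant c, then f_n ≥ f_{n+1}. -/

import Mathlib

/-- A bounded differentiable function cannot have derivative bounded above by
a negative constant. -/
lemma mf_nonneg (F : ℝ → ℝ) (hF : Differentiable ℝ F) (MF : ℝ)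
    (hFbdd : ∃ B, ∀ t, |F t| ≤ B) (hMF : ∀ t, deriv F t ≤ MF) : 0 ≤ MF := by
  by_contra h
  push_neg at h
  obtain ⟨B, hB⟩ := hFbdd
  have hB0 : 0 ≤ B := (abs_nonneg _).trans (hB 0)
  have hne : MF ≠ 0 := ne_of_lt h
  set t : ℝ := (2 * B + 1) / (-MF) with ht
  have ht0 : 0 < t := div_pos (by linarith) (by linarith)
  obtain ⟨ξ, hξ, hd⟩ := exists_deriv_eq_slope F ht0 (hF.continuous.continuousOn)
    (fun x _ => (hF x).differentiableWithinAt)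
  have h1 : (F t - F 0) / (t - 0) ≤ MF := hd ▸ hMF ξ
  have h2 : F t - F 0 ≤ MF * t := by
    rw [div_le_iff₀ (by linarith)] at h1
    linarith [h1]
  have h3 : MF * t = -(2 * B + 1) := by
    rw [ht]
    field_simp
  have h4 : |F t| ≤ B := hB t
  have h5 : |F 0| ≤ B := hB 0
  rw [abs_le] at h4 h5
  linarith [h4.1, h5.2]

/-- Monotone iteration with the shifted operator `Δ + C` on a compact surface: if
`C ≥ 1 + sup(λ e^{-v})·sup F'` and consecutive iterates satisfy the iteration scheme
with `f_{n-1} ≥ f_n`, then `f_n ≥ f_{n+1}`.  Here `Δ` is abstracted as a linear operator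
satisfying the maximum principle for `Δ + C` with `C > 0`. -/
theorem stmt_14 {X : Type*} [TopologicalSpace X] [CompactSpace X] [Nonempty X]
    (Δ : (X → ℝ) → (X → ℝ))
    (hΔlin : ∀ w₁ w₂ : X → ℝ, Δ (fun x => w₁ x - w₂ x) = fun x => Δ w₁ x - Δ w₂ x)
    (hmp : ∀ w : X → ℝ, ∀ C : ℝ, 0 < C → (∀ x, Δ w x + C * w x ≤ 0) → ∀ x, w x ≤ 0)
    (lam : ℝ) (hlam : 0 < lam) (v u : X → ℝ) (hv : Continuous v) (hu : Continuous u)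
    (F : ℝ → ℝ) (hF : Differentiable ℝ F)
    (MF Mev C c : ℝ) (hFbdd : ∃ B, ∀ t, |F t| ≤ B)
    (hMF : ∀ t, deriv F t ≤ MF)
    (hMev : ∀ x, Real.exp (-(v x)) ≤ Mev) (hMev0 : 0 ≤ Mev)
    (hC : 1 + lam * Mev * MF ≤ C)
    (f1 f2 f3 : X → ℝ)
    (hmono : ∀ x, f2 x ≤ f1 x)
    (heq2 : ∀ x, Δ f2 x + C * f2 x
      = -(lam/2) * Real.exp (-(v x)) * F (2 * f1 x + u x) + C * f1 x + c)
    (heq3 : ∀ x, Δ f3 x + C * f3 x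
      = -(lam/2) * Real.exp (-(v x)) * F (2 * f2 x + u x) + C * f2 x + c) :
    ∀ x, f3 x ≤ f2 x := by
  have hMF0 : 0 ≤ MF := mf_nonneg F hF MF hFbdd hMF
  have hCpos : 0 < C := by nlinarith [mul_nonneg (mul_nonneg hlam.le hMev0) hMF0]
  set w : X → ℝ := fun x => f3 x - f2 x with hw
  have key : ∀ x, Δ w x + C * w x ≤ 0 := by
    intro x
    have hΔw : Δ w x = Δ f3 x - Δ f2 x := by
      rw [hw, hΔlin f3 f2]
    set a : ℝ := 2 * f2 x + u x with ha
    set b : ℝ := 2 * f1 x + u x with hb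
    have hsum : Δ w x + C * w x
        = -(lam/2) * Real.exp (-(v x)) * (F a - F b) + C * (f2 x - f1 x) := by
      rw [hΔw]
      simp only [hw]
      linear_combination heq3 x - heq2 x
    have hab : a ≤ b := by
      have := hmono x
      simp only [ha, hb]; linarith
    have hex : 0 < Real.exp (-(v x)) := Real.exp_pos _
    have hf : 0 ≤ f1 x - f2 x := by linarith [hmono x]
    rcases eq_or_lt_of_le hab with heq | hlt
    · have h0 : F a - F b = 0 := by rw [heq]; ring
      rw [hsum, h0]
      have := hmono x
      nlinarith
    · obtain ⟨ξ, hξ, hd⟩ := exists_deriv_eq_slope F hlt (hF.continuous.continuousOn)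
        (fun y _ => (hF y).differentiableWithinAt)
      have hbane : b - a ≠ 0 := sub_ne_zero.mpr (ne_of_gt hlt)
      rw [eq_div_iff hbane] at hd
      have hFab : F a - F b = deriv F ξ * (a - b) := by linear_combination hd
      have hab2 : a - b = -2 * (f1 x - f2 x) := by simp only [ha, hb]; ring
      have hder : deriv F ξ ≤ MF := hMF ξ
      have e1 : lam * Real.exp (-(v x)) * deriv F ξ ≤ lam * Real.exp (-(v x)) * MF :=
        mul_le_mul_of_nonneg_left hder (mul_nonneg hlam.le hex.le)
      have e2 : lam * Real.exp (-(v x)) * MF ≤ lam * Mev * MF :=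
        mul_le_mul_of_nonneg_right (mul_le_mul_of_nonneg_left (hMev x) hlam.le) hMF0
      have hkey : (lam * Real.exp (-(v x)) * deriv F ξ - C) * (f1 x - f2 x) ≤ 0 :=
        mul_nonpos_of_nonpos_of_nonneg (by linarith) hf
      rw [hsum, hFab, hab2]
      nlinarith [hkey]
  intro x
  have := hmp w C hCpos key x
  simp only [hw] at this
  linarith [this]
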